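/- Let three players have measures on [0,1]: μ₁ = Lebesgue measure, and μ₂ = μ₃ = uniform measure on (0.4, 0.6) (density 5 on (0.4,0.6), 0 elsewhere). The contiguous allocation A₁ = (0,1/3), A₂ = (1/3,1/2), A₃ = (1/2,1) gives values μ₁(A₁) = 1/3, μ₂(A₂) = 1/2, μ₃(A₃) = 1/2, while the allocation B₁ = (0, 0.4), B₂ = (0.4, 0.5), B₃ = (0.5, 1) gives μ₁(B₁) = 0.4 > 1/3, μ₂(B₂) = 1/2, μ₃(B₃) = 1/2. Hence the first allocation is not strongly Pareto optimal among allocations using two cuts. -/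
import Mathlib


open MeasureTheory ENNReal

/-- Player 1's measure: Lebesgue on `[0,1]`. -/
noncomputable def mu1 : Measure ℝ := volume.restrict (Set.Icc (0:ℝ) 1)

/-- Players 2 and 3: uniform on `(0.4, 0.6)` (density 5 there, 0 elsewhere). -/
noncomputable def mu23 : Measure ℝ :=
  volume.withDensity (Set.indicator (Set.Ioo (0.4 : ℝ) 0.6) (fun _ => (5 : ℝ≥0∞)))

/-- Strong Pareto optimality among two-cut (contiguous) allocations: no assignment of
the three intervals determined by two cuts is at least as good for every player and
strictly better for some player. -/
def StronglyPOTwoCut (ν₁ ν₂ ν₃ : Measure ℝ) (A₁ A₂ A₃ : Set ℝ) : Prop :=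
  ¬ ∃ s t : ℝ, ∃ B₁ B₂ B₃ : Set ℝ, 0 ≤ s ∧ s ≤ t ∧ t ≤ 1 ∧
      ({B₁, B₂, B₃} : Set (Set ℝ)) = {Set.Ioo 0 s, Set.Ioo s t, Set.Ioo t 1} ∧
      ν₁ A₁ ≤ ν₁ B₁ ∧ ν₂ A₂ ≤ ν₂ B₂ ∧ ν₃ A₃ ≤ ν₃ B₃ ∧
      (ν₁ A₁ < ν₁ B₁ ∨ ν₂ A₂ < ν₂ B₂ ∨ ν₃ A₃ < ν₃ B₃)

lemma mu23_Ioo (a b : ℝ) :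
    mu23 (Set.Ioo a b) = 5 * volume (Set.Ioo (0.4:ℝ) 0.6 ∩ Set.Ioo a b) := by
  rw [mu23, withDensity_apply _ measurableSet_Ioo,
    lintegral_indicator measurableSet_Ioo,
    Measure.restrict_restrict measurableSet_Ioo, setLIntegral_const]

lemma half : (ENNReal.ofReal (1/2) : ℝ≥0∞) = 1/2 := by
  rw [ENNReal.ofReal_div_of_pos (by norm_num)]
  norm_num

theorem stmt_9 :
    mu1 (Set.Ioo (0:ℝ) (1/3)) = 1/3 ∧
    mu23 (Set.Ioo (1/3 : ℝ) (1/2)) = 1/2 ∧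
    mu23 (Set.Ioo (1/2 : ℝ) 1) = 1/2 ∧
    mu1 (Set.Ioo (0:ℝ) 0.4) = ENNReal.ofReal 0.4 ∧
    (1/3 : ℝ≥0∞) < ENNReal.ofReal 0.4 ∧
    mu23 (Set.Ioo (0.4 : ℝ) 0.5) = 1/2 ∧
    mu23 (Set.Ioo (0.5 : ℝ) 1) = 1/2 ∧
    ¬ StronglyPOTwoCut mu1 mu23 mu23
        (Set.Ioo (0:ℝ) (1/3)) (Set.Ioo (1/3 : ℝ) (1/2)) (Set.Ioo (1/2 : ℝ) 1) := by
  have h1 : mu1 (Set.Ioo (0:ℝ) (1/3)) = 1/3 := by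
    rw [mu1, Measure.restrict_apply measurableSet_Ioo,
      Set.inter_eq_left.mpr (Set.Ioo_subset_Icc_self.trans (Set.Icc_subset_Icc le_rfl (by norm_num))),
      Real.volume_Ioo]
    rw [show (1/3 - 0 : ℝ) = 1/3 by ring, ENNReal.ofReal_div_of_pos (by norm_num)]
    norm_num
  have h2 : mu23 (Set.Ioo (1/3 : ℝ) (1/2)) = 1/2 := by
    rw [mu23_Ioo, Set.Ioo_inter_Ioo,
      show max (0.4:ℝ) (1/3) = 0.4 by norm_num,
      show min (0.6:ℝ) (1/2) = 1/2 by norm_num, Real.volume_Ioo,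
      show (1/2 - 0.4 : ℝ) = 0.1 by norm_num,
      show (5 : ℝ≥0∞) = ENNReal.ofReal 5 by norm_num,
      ← ENNReal.ofReal_mul (by norm_num),
      show (5 * 0.1 : ℝ) = 1/2 by norm_num, half]
  have h3 : mu23 (Set.Ioo (1/2 : ℝ) 1) = 1/2 := by
    rw [mu23_Ioo, Set.Ioo_inter_Ioo,
      show max (0.4:ℝ) (1/2) = 1/2 by norm_num,
      show min (0.6:ℝ) 1 = 0.6 by norm_num, Real.volume_Ioo,
      show (0.6 - 1/2 : ℝ) = 0.1 by norm_num,
      show (5 : ℝ≥0∞) = ENNReal.ofReal 5 by norm_num,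
      ← ENNReal.ofReal_mul (by norm_num),
      show (5 * 0.1 : ℝ) = 1/2 by norm_num, half]
  have h4 : mu1 (Set.Ioo (0:ℝ) 0.4) = ENNReal.ofReal 0.4 := by
    rw [mu1, Measure.restrict_apply measurableSet_Ioo,
      Set.inter_eq_left.mpr (Set.Ioo_subset_Icc_self.trans (Set.Icc_subset_Icc le_rfl (by norm_num))),
      Real.volume_Ioo, show (0.4 - 0 : ℝ) = 0.4 by ring]
  have h5 : (1/3 : ℝ≥0∞) < ENNReal.ofReal 0.4 := by
    rw [show (1/3 : ℝ≥0∞) = ENNReal.ofReal (1/3) by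
      rw [ENNReal.ofReal_div_of_pos (by norm_num)]; norm_num]
    exact (ENNReal.ofReal_lt_ofReal_iff (by norm_num)).mpr (by norm_num)
  have h6 : mu23 (Set.Ioo (0.4 : ℝ) 0.5) = 1/2 := by
    rw [mu23_Ioo, Set.Ioo_inter_Ioo,
      show max (0.4:ℝ) 0.4 = 0.4 by norm_num,
      show min (0.6:ℝ) 0.5 = 0.5 by norm_num, Real.volume_Ioo,
      show (0.5 - 0.4 : ℝ) = 0.1 by norm_num,
      show (5 : ℝ≥0∞) = ENNReal.ofReal 5 by norm_num,
      ← ENNReal.ofReal_mul (by norm_num),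
      show (5 * 0.1 : ℝ) = 1/2 by norm_num, half]
  have h7 : mu23 (Set.Ioo (0.5 : ℝ) 1) = 1/2 := by
    rw [mu23_Ioo, Set.Ioo_inter_Ioo,
      show max (0.4:ℝ) 0.5 = 0.5 by norm_num,
      show min (0.6:ℝ) 1 = 0.6 by norm_num, Real.volume_Ioo,
      show (0.6 - 0.5 : ℝ) = 0.1 by norm_num,
      show (5 : ℝ≥0∞) = ENNReal.ofReal 5 by norm_num,
      ← ENNReal.ofReal_mul (by norm_num),
      show (5 * 0.1 : ℝ) = 1/2 by norm_num, half]
  refine ⟨h1, h2, h3, h4, h5, h6, h7, ?_⟩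
  intro hpo
  exact hpo ⟨0.4, 0.5, Set.Ioo 0 0.4, Set.Ioo 0.4 0.5, Set.Ioo 0.5 1,
    by norm_num, by norm_num, by norm_num, rfl,
    by rw [h1, h4]; exact h5.le,
    by rw [h2, h6],
    by rw [h3, h7],
    Or.inl (by rw [h1, h4]; exact h5)⟩
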